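/- Let d₁, d₂ ≥ 0 and let m be the type-II canonical depolarizing differential Mueller matrix m = [[d₁+d₂, d₂, 0, 0], [−d₂, d₁−d₂, 0, 0], [0, 0, −d₁, 0], [0, 0, 0, −d₁]]. Then for every t ≥ 0 and every admissible Stokes vector s ∈ ℝ⁴, the matrix M = exp(t·m) satisfies (M s)ᵀ G (M s) ≥ sᵀ G s. -/

import Mathlib

open Matrix

/-- The Minkowski metric matrix G = diag(1, -1, -1, -1). -/
noncomputable def G : Matrix (Fin 4) (Fin 4) ℝ := Matrix.diagonal ![1, -1, -1, -1]

/-- A Stokes vector is admissible if s₀ ≥ 0 and sᵀGs ≥ 0. -/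
def StokesAdmissible (s : Fin 4 → ℝ) : Prop := 0 ≤ s 0 ∧ 0 ≤ s ⬝ᵥ G.mulVec s

lemma exp_of_sq_zero {n : Type*} [Fintype n] [DecidableEq n] (A : Matrix n n ℝ)
    (h : A * A = 0) : NormedSpace.exp A = 1 + A := by
  rw [NormedSpace.exp_eq_tsum (𝕂 := ℝ)]
  have hpow : ∀ k ∉ Finset.range 2, ((k.factorial : ℝ)⁻¹ • A ^ k) = 0 := by
    intro k hk
    rw [Finset.mem_range, not_lt] at hk
    obtain ⟨j, rfl⟩ := Nat.exists_eq_add_of_le hk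
    rw [pow_add, pow_two, h, zero_mul, smul_zero]
  simp only []
  rw [tsum_eq_sum hpow]
  simp [Finset.sum_range_succ]

set_option maxHeartbeats 1000000 in
theorem minkowski_nondecreasing_exp_typeII
    (d₁ d₂ : ℝ) (h₁ : 0 ≤ d₁) (h₂ : 0 ≤ d₂)
    (m : Matrix (Fin 4) (Fin 4) ℝ)
    (hm : m = !![d₁ + d₂, d₂, 0, 0;
                 -d₂, d₁ - d₂, 0, 0;
                 0, 0, -d₁, 0;
                 0, 0, 0, -d₁])
    (t : ℝ) (ht : 0 ≤ t) (s : Fin 4 → ℝ) (hs : StokesAdmissible s) :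
    s ⬝ᵥ G.mulVec s ≤
      ((NormedSpace.exp (t • m)).mulVec s) ⬝ᵥ G.mulVec ((NormedSpace.exp (t • m)).mulVec s) := by
  have ha0 : 0 ≤ t * d₁ := mul_nonneg ht h₁
  have hu0 : 0 ≤ t * d₂ := mul_nonneg ht h₂
  set a : ℝ := t * d₁ with ha
  set u : ℝ := t * d₂ with hu
  set N : Matrix (Fin 4) (Fin 4) ℝ :=
    !![u, u, 0, 0; -u, -u, 0, 0; 0, 0, 0, 0; 0, 0, 0, 0] with hN
  set D : Matrix (Fin 4) (Fin 4) ℝ := Matrix.diagonal ![a, a, -a, -a] with hD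
  have hsplit : t • m = D + N := by
    subst hm
    ext i j
    fin_cases i <;> fin_cases j <;>
      simp [hD, hN, Matrix.diagonal_apply, Matrix.vecHead, Matrix.vecTail, Function.comp,
        ha, hu] <;> ring
  have hcomm : Commute D N := by
    show D * N = N * D
    ext i j
    fin_cases i <;> fin_cases j <;>
      simp [hD, hN, Matrix.mul_apply, Fin.sum_univ_four, Matrix.diagonal_apply,
        Matrix.vecHead, Matrix.vecTail, Function.comp] <;> ring
  have hN2 : N * N = 0 := by
    ext i j
    fin_cases i <;> fin_cases j <;>
      simp [hN, Matrix.mul_apply, Fin.sum_univ_four, Matrix.vecHead, Matrix.vecTail]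
  set e : ℝ := Real.exp a with he
  set b : ℝ := Real.exp (-a) with hb
  have hexp : NormedSpace.exp (t • m) =
      !![e + u * e, u * e, 0, 0; -(u * e), e - u * e, 0, 0; 0, 0, b, 0; 0, 0, 0, b] := by
    rw [hsplit, Matrix.exp_add_of_commute D N hcomm, hD, Matrix.exp_diagonal,
      exp_of_sq_zero N hN2]
    ext i j
    fin_cases i <;> fin_cases j <;>
      simp [hN, Matrix.mul_apply, Fin.sum_univ_four, Matrix.diagonal_apply, Matrix.one_apply,
        Matrix.vecHead, Matrix.vecTail, Function.comp,
        Pi.exp_def, ← Real.exp_eq_exp_ℝ, ← he, ← hb] <;> ring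
  rw [hexp]
  obtain ⟨hs0, hsQ⟩ := hs
  have hQ : s 1 * s 1 + s 2 * s 2 + s 3 * s 3 ≤ s 0 * s 0 := by
    simp [G, dotProduct, Matrix.mulVec, Fin.sum_univ_four, Matrix.diagonal_apply,
      Matrix.vecHead, Matrix.vecTail] at hsQ
    linarith
  have he1 : 1 ≤ e := Real.one_le_exp ha0
  have hb1 : b ≤ 1 := Real.exp_le_one_iff.mpr (neg_nonpos.mpr ha0)
  have hb0 : 0 < b := Real.exp_pos _
  have t1 : 0 ≤ (e * e - 1) * (s 0 * s 0 - s 1 * s 1) := by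
    apply mul_nonneg
    · nlinarith
    · nlinarith [mul_self_nonneg (s 2), mul_self_nonneg (s 3)]
  have t2 : 0 ≤ 2 * u * (e * e) * (s 0 + s 1) ^ 2 :=
    mul_nonneg (mul_nonneg (by linarith) (mul_self_nonneg e)) (sq_nonneg _)
  have t3 : 0 ≤ (1 - b * b) * (s 2 * s 2 + s 3 * s 3) := by
    apply mul_nonneg
    · nlinarith
    · nlinarith [mul_self_nonneg (s 2), mul_self_nonneg (s 3)]
  have lhs_eq : s ⬝ᵥ G.mulVec s = s 0 * s 0 - s 1 * s 1 - s 2 * s 2 - s 3 * s 3 := by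
    simp [G, dotProduct, Matrix.mulVec, Fin.sum_univ_four, Matrix.diagonal_apply,
      Matrix.vecHead, Matrix.vecTail]
    ring
  have hv : (!![e + u * e, u * e, 0, 0; -(u * e), e - u * e, 0, 0; 0, 0, b, 0; 0, 0, 0, b]).mulVec s
      = ![(e + u * e) * s 0 + u * e * s 1, -(u * e) * s 0 + (e - u * e) * s 1, b * s 2, b * s 3] := by
    funext i
    fin_cases i <;>
      simp [Matrix.mulVec, dotProduct, Fin.sum_univ_four, Matrix.vecHead, Matrix.vecTail]
  have rhs_eq :
      ((!![e + u * e, u * e, 0, 0; -(u * e), e - u * e, 0, 0; 0, 0, b, 0; 0, 0, 0, b]).mulVec s)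
        ⬝ᵥ G.mulVec
      ((!![e + u * e, u * e, 0, 0; -(u * e), e - u * e, 0, 0; 0, 0, b, 0; 0, 0, 0, b]).mulVec s)
      = (s 0 * s 0 - s 1 * s 1 - s 2 * s 2 - s 3 * s 3)
        + ((e * e - 1) * (s 0 * s 0 - s 1 * s 1) + 2 * u * (e * e) * (s 0 + s 1) ^ 2
          + (1 - b * b) * (s 2 * s 2 + s 3 * s 3)) := by
    rw [hv]
    simp [G, dotProduct, Matrix.mulVec, Fin.sum_univ_four, Matrix.diagonal_apply,
      Matrix.vecHead, Matrix.vecTail]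
    ring
  rw [lhs_eq, rhs_eq]
  linarith
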